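/- For n ≥ k ≥ d = 2m+1 ≥ 5, the diameter of the graph of the ordinary polytope P^{d,k,n} equals ⌈n/k⌉. -/

import Mathlib

/-- Half of the adjacency relation of the graph of the ordinary polytope
`P^{d,k,n}` (on vertex indices, with `a < b`): `b - a ≤ k - 2`, or `b = a + k`,
or `{a,b} = {0, k-1}`, or `{a,b} = {n-k+1, n}`. -/
def oAdj (k n a b : ℕ) : Prop :=
  a < b ∧ (b - a ≤ k - 2 ∨ b = a + k ∨ (a = 0 ∧ b = k - 1) ∨ (a = n - k + 1 ∧ b = n))

/-- The graph of the ordinary polytope `P^{d,k,n}`, on the vertices `x_0, …, x_n`. -/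
def ordinaryGraph (k n : ℕ) : SimpleGraph (Fin (n + 1)) where
  Adj a b := oAdj k n a.val b.val ∨ oAdj k n b.val a.val
  symm := ⟨by intro a b h; tauto⟩
  loopless := ⟨by
    intro a h
    rcases h with h | h <;> exact absurd h.1 (lt_irrefl _)⟩

lemma adj_mk {k n a b : ℕ} (ha : a < n + 1) (hb : b < n + 1) (h : oAdj k n a b) :
    (ordinaryGraph k n).Adj ⟨a, ha⟩ ⟨b, hb⟩ := Or.inl h

/-- Walks of `q` steps of size `k`. -/
lemma walk_up (k n : ℕ) (hk : 0 < k) :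
    ∀ (q a b : ℕ) (ha : a ≤ n) (hb : b ≤ n), b = a + q * k →
    ∃ p : (ordinaryGraph k n).Walk ⟨a, by omega⟩ ⟨b, by omega⟩, p.length = q := by
  intro q
  induction q with
  | zero =>
    intro a b ha hb heq
    obtain rfl : a = b := by omega
    exact ⟨.nil, rfl⟩
  | succ q ih =>
    intro a b ha hb heq
    have hkk : (q + 1) * k = q * k + k := by ring
    have hak : a + k ≤ n := by omega
    obtain ⟨p, hp⟩ := ih (a + k) b hak hb (by omega)
    exact ⟨.cons (adj_mk (by omega) (by omega) ⟨by omega, Or.inr (Or.inl rfl)⟩) p,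
      by simp [hp]⟩

/-- Upper bound: explicit walks of length at most `c`, where `n ≤ c * k`. -/
lemma key_walk (k n c a b : ℕ) (hk : 5 ≤ k) (hkn : k ≤ n) (h1 : n ≤ c * k)
    (hab : a ≤ b) (hb : b ≤ n) :
    ∃ p : (ordinaryGraph k n).Walk ⟨a, by omega⟩ ⟨b, by omega⟩, p.length ≤ c := by
  have hk0 : 0 < k := by omega
  have mulle : ∀ x y : ℕ, x * k ≤ y * k → x ≤ y :=
    fun x y h => Nat.le_of_mul_le_mul_right h hk0
  have mul_mono : ∀ x y : ℕ, x ≤ y → x * k ≤ y * k :=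
    fun x y h => Nat.mul_le_mul_right k h
  obtain ⟨q, r, hrk, hqr⟩ : ∃ q r, r < k ∧ b - a = q * k + r :=
    ⟨(b - a) / k, (b - a) % k, Nat.mod_lt _ hk0, ((b - a).div_add_mod' k).symm⟩
  rcases Nat.lt_or_ge r (k - 1) with hsmall | hbig
  · by_cases h0 : r = 0
    · obtain ⟨p, hp⟩ := walk_up k n hk0 q a b (by omega) hb (by omega)
      exact ⟨p, by rw [hp]; exact mulle q c (by omega)⟩
    · -- 1 ≤ r ≤ k - 2 : one small step then q big steps
      have hqc : q + 1 ≤ c := by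
        rcases Nat.lt_or_ge q c with h | h
        · omega
        · exact absurd (mul_mono c q h) (by omega)
      obtain ⟨p, hp⟩ := walk_up k n hk0 q (a + r) b (by omega) hb (by omega)
      exact ⟨.cons (adj_mk (by omega) (by omega) ⟨by omega, Or.inl (by omega)⟩) p,
        by simp only [SimpleGraph.Walk.length_cons, hp]; omega⟩
  · have hr' : r = k - 1 := by omega
    have hqc : q + 1 ≤ c := by
      rcases Nat.lt_or_ge q c with h | h
      · omega
      · exact absurd (mul_mono c q h) (by omega)
    by_cases hc : q + 2 ≤ c
    · -- steps of sizes 1, k-2, then q big steps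
      have h2n : a + 1 + (k - 2) ≤ n := by omega
      obtain ⟨p, hp⟩ := walk_up k n hk0 q (a + 1 + (k - 2)) b h2n hb (by omega)
      have e1 : (ordinaryGraph k n).Adj ⟨a, by omega⟩ ⟨a + 1, by omega⟩ :=
        adj_mk (by omega) (by omega) ⟨by omega, Or.inl (by omega)⟩
      have e2 : (ordinaryGraph k n).Adj ⟨a + 1, by omega⟩ ⟨a + 1 + (k - 2), by omega⟩ :=
        adj_mk (by omega) (by omega) ⟨by omega, Or.inl (by omega)⟩
      exact ⟨.cons e1 (.cons e2 p),
        by simp only [SimpleGraph.Walk.length_cons, hp]; omega⟩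
    · -- c = q + 1 : must use a special edge
      have hc1 : c = q + 1 := by omega
      have hck : c * k = q * k + k := by rw [hc1]; ring
      have ha1 : a ≤ 1 := by omega
      interval_cases a
      · -- a = 0 : use the edge {0, k-1}
        obtain ⟨p, hp⟩ := walk_up k n hk0 q (k - 1) b (by omega) hb (by omega)
        exact ⟨.cons (adj_mk (by omega) (by omega)
            ⟨by omega, Or.inr (Or.inr (Or.inl ⟨rfl, rfl⟩))⟩) p,
          by simp only [SimpleGraph.Walk.length_cons, hp]; omega⟩
      · -- a = 1 : then b = n; use the edge {n-k+1, n}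
        have hbn : b = n := by omega
        obtain ⟨p, hp⟩ := walk_up k n hk0 q 1 (n - k + 1) (by omega) (by omega) (by omega)
        refine ⟨(p.concat (adj_mk (by omega) (by omega)
            ⟨by omega, Or.inr (Or.inr (Or.inr ⟨rfl, rfl⟩))⟩)).copy rfl
            (by simp [hbn]), ?_⟩
        simp only [SimpleGraph.Walk.length_copy, SimpleGraph.Walk.length_concat, hp]
        omega

/-- Lower bound: each step moves by at most `k`. -/
lemma walk_ge (k n : ℕ) (hkn : k ≤ n) {u v : Fin (n + 1)}
    (p : (ordinaryGraph k n).Walk u v) :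
    (v : ℕ) ≤ u + k * p.length ∧ (u : ℕ) ≤ v + k * p.length := by
  induction p with
  | nil => simp
  | @cons u w v h p ih =>
    have h' : oAdj k n u.val w.val ∨ oAdj k n w.val u.val := h
    have hstep : (w : ℕ) ≤ u + k ∧ (u : ℕ) ≤ w + k := by
      unfold oAdj at h'
      omega
    rw [SimpleGraph.Walk.length_cons]
    have hm : k * (p.length + 1) = k * p.length + k := by ring
    omega

/-- For `n ≥ k ≥ d = 2m+1 ≥ 5`, the diameter of the graph of the ordinary
polytope `P^{d,k,n}` is `⌈n / k⌉`. -/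
theorem ordinary_diameter (d k n m : ℕ) (hdm : d = 2 * m + 1)
    (hd5 : 5 ≤ d) (hdk : d ≤ k) (hkn : k ≤ n) :
    (ordinaryGraph k n).diam = ⌈(n : ℚ) / (k : ℚ)⌉₊ := by
  have hk5 : 5 ≤ k := by omega
  set c := ⌈(n : ℚ) / (k : ℚ)⌉₊ with hc
  have hkQ : (0 : ℚ) < (k : ℚ) := by positivity
  have hcL : ∀ L : ℕ, c ≤ L ↔ n ≤ L * k := by
    intro L
    rw [hc, Nat.ceil_le, div_le_iff₀ hkQ]
    exact_mod_cast Iff.rfl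
  have h1 : n ≤ c * k := (hcL c).mp le_rfl
  have hub : ∀ u v : Fin (n + 1), (ordinaryGraph k n).edist u v ≤ (c : ℕ∞) := by
    have base : ∀ u v : Fin (n + 1), u.val ≤ v.val →
        (ordinaryGraph k n).edist u v ≤ (c : ℕ∞) := by
      intro u v huv
      obtain ⟨p, hp⟩ := key_walk k n c u.val v.val hk5 hkn h1 huv (by omega)
      exact le_trans (SimpleGraph.edist_le p) (by exact_mod_cast hp)
    intro u v
    rcases le_total u.val v.val with h | h
    · exact base u v h
    · rw [SimpleGraph.edist_comm]; exact base v u h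
  have hub' : (ordinaryGraph k n).ediam ≤ (c : ℕ∞) := SimpleGraph.ediam_le_of_edist_le hub
  have hlb : (c : ℕ∞) ≤ (ordinaryGraph k n).edist ⟨0, by omega⟩ ⟨n, by omega⟩ := by
    rw [SimpleGraph.edist_eq_sInf]
    apply le_sInf
    rintro x ⟨p, rfl⟩
    have hbd := (walk_ge k n hkn p).1
    simp only [Fin.val_mk] at hbd
    have hmm : k * p.length = p.length * k := by ring
    have hcp : c ≤ p.length := (hcL _).mpr (by omega)
    show (c : ℕ∞) ≤ (p.length : ℕ∞)
    exact_mod_cast hcp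
  have hed : (ordinaryGraph k n).ediam = (c : ℕ∞) :=
    le_antisymm hub' (le_trans hlb SimpleGraph.edist_le_ediam)
  rw [SimpleGraph.diam, hed]
  simp
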